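/- A finite multi-digraph G with at least one edge admits a flow that is strictly positive on every edge if and only if G is reflexive (i.e., its weakly connected components coincide with its strongly connected components). Moreover, if G has M vertices and E edges, such a flow can be chosen with value at most E^M on every edge. -/

import Mathlib

/-- Directed one-step relation of a multi-digraph given by source and target maps. -/
def DStep {M E : ℕ} (src tgt : Fin E → Fin M) (a b : Fin M) : Prop :=
  ∃ e, src e = a ∧ tgt e = b

/-- Undirected (weak) one-step relation. -/
def WStep {M E : ℕ} (src tgt : Fin E → Fin M) (a b : Fin M) : Prop :=
  ∃ e, (src e = a ∧ tgt e = b) ∨ (src e = b ∧ tgt e = a)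

/-- `G` is reflexive: weakly connected components coincide with strongly connected ones. -/
def Reflexive' {M E : ℕ} (src tgt : Fin E → Fin M) : Prop :=
  ∀ a b, Relation.ReflTransGen (WStep src tgt) a b → Relation.ReflTransGen (DStep src tgt) a b

/-- Conservation of an edge-valued function at every vertex. -/
def Conserved {M E : ℕ} (src tgt : Fin E → Fin M) (f : Fin E → ℕ) : Prop :=
  ∀ v : Fin M, ∑ e ∈ Finset.univ.filter (fun e => tgt e = v), f e
    = ∑ e ∈ Finset.univ.filter (fun e => src e = v), f e

section Aux

variable {M E : ℕ} (src tgt : Fin E → Fin M)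

/-- Walk from `a` to `b` along a list of edges. -/
def IsWalk : Fin M → Fin M → List (Fin E) → Prop
  | a, b, [] => a = b
  | a, b, (e :: L) => src e = a ∧ IsWalk (tgt e) b L

variable {src tgt}

lemma rtg_to_walk {a b : Fin M} (h : Relation.ReflTransGen (DStep src tgt) a b) :
    ∃ L, IsWalk src tgt a b L := by
  induction h using Relation.ReflTransGen.head_induction_on with
  | refl => exact ⟨[], rfl⟩
  | head hstep _ ih =>
    obtain ⟨e, he1, he2⟩ := hstep
    obtain ⟨L, hL⟩ := ih
    exact ⟨e :: L, he1, he2 ▸ hL⟩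

lemma walk_append {a b c : Fin M} {L1 L2 : List (Fin E)} (h1 : IsWalk src tgt a b L1)
    (h2 : IsWalk src tgt b c L2) : IsWalk src tgt a c (L1 ++ L2) := by
  induction L1 generalizing a with
  | nil => rw [show a = b from h1]; exact h2
  | cons x L ih => exact ⟨h1.1, ih h1.2⟩

lemma walk_split {a b : Fin M} {L : List (Fin E)} (h : IsWalk src tgt a b L)
    {e : Fin E} (he : e ∈ L) :
    ∃ P Q, L = P ++ e :: Q ∧ IsWalk src tgt a (src e) P ∧ IsWalk src tgt (tgt e) b Q ∧
      e ∉ P := by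
  induction L generalizing a with
  | nil => simp at he
  | cons x L ih =>
    obtain ⟨hx, hL⟩ := h
    by_cases hxe : x = e
    · subst hxe
      exact ⟨[], L, rfl, hx.symm, hL, by simp⟩
    · have he' : e ∈ L := by
        rcases List.mem_cons.mp he with h' | h'
        · exact absurd h'.symm hxe
        · exact h'
      obtain ⟨P, Q, hPQ, hP, hQ, heP⟩ := ih hL he'
      refine ⟨x :: P, Q, by rw [hPQ]; rfl, ⟨hx, hP⟩, hQ, ?_⟩
      simp only [List.mem_cons]
      rintro (h' | h')
      · exact hxe h'.symm
      · exact heP h'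

lemma exists_nodup_walk_aux (n : ℕ) :
    ∀ {L : List (Fin E)} {a b : Fin M}, L.length ≤ n → IsWalk src tgt a b L →
      ∃ L', IsWalk src tgt a b L' ∧ L'.Nodup := by
  induction n with
  | zero =>
    intro L a b hlen h
    rw [Nat.le_zero, List.length_eq_zero_iff] at hlen
    subst hlen
    exact ⟨[], h, List.nodup_nil⟩
  | succ n ih =>
    intro L a b hlen h
    by_cases hnd : L.Nodup
    · exact ⟨L, h, hnd⟩
    · obtain ⟨x, hx⟩ := List.exists_duplicate_iff_not_nodup.mpr hnd
      have hxm : x ∈ L := hx.mem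
      obtain ⟨P, Q, hPQ, hP, hQ, hxP⟩ := walk_split h hxm
      have hxQ : x ∈ Q := by
        have h2 : 2 ≤ L.count x := List.duplicate_iff_two_le_count.mp hx
        rw [hPQ] at h2
        simp only [List.count_append, List.count_cons_self,
          List.count_eq_zero_of_not_mem hxP, Nat.zero_add] at h2
        exact List.count_pos_iff.mp (by omega)
      obtain ⟨Q1, Q2, hQ12, _, hQ2, _⟩ := walk_split hQ hxQ
      have hw : IsWalk src tgt a b (P ++ x :: Q2) := walk_append hP ⟨rfl, hQ2⟩
      refine ih ?_ hw
      have hlen' : L.length ≤ n + 1 := hlen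
      rw [hPQ, hQ12] at hlen'
      simp only [List.length_append, List.length_cons] at hlen' ⊢
      omega

lemma exists_nodup_walk {a b : Fin M} {L : List (Fin E)} (h : IsWalk src tgt a b L) :
    ∃ L', IsWalk src tgt a b L' ∧ L'.Nodup :=
  exists_nodup_walk_aux L.length le_rfl h

/-- Every edge lies on a simple directed cycle, assuming reflexivity. -/
lemma exists_cycle (hrefl : Reflexive' src tgt) (e : Fin E) :
    ∃ C : List (Fin E), C.Nodup ∧ e ∈ C ∧ IsWalk src tgt (src e) (src e) C := by
  have hW : Relation.ReflTransGen (WStep src tgt) (tgt e) (src e) :=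
    Relation.ReflTransGen.single ⟨e, Or.inr ⟨rfl, rfl⟩⟩
  obtain ⟨L, hL⟩ := rtg_to_walk (hrefl _ _ hW)
  obtain ⟨L', hL', hnd⟩ := exists_nodup_walk hL
  by_cases heL : e ∈ L'
  · obtain ⟨P, Q, hPQ, hP, _, heP⟩ := walk_split hL' heL
    refine ⟨e :: P, ?_, List.mem_cons_self, rfl, hP⟩
    exact List.nodup_cons.mpr ⟨heP, (hPQ ▸ hnd).of_append_left⟩
  · exact ⟨e :: L', List.nodup_cons.mpr ⟨heL, hnd⟩, List.mem_cons_self, rfl, hL'⟩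

/-- Count-conservation along a walk. -/
lemma walk_count {a b : Fin M} {L : List (Fin E)} (h : IsWalk src tgt a b L) (v : Fin M) :
    (∑ e ∈ Finset.univ.filter (fun e => tgt e = v), L.count e) + (if v = a then 1 else 0)
      = (∑ e ∈ Finset.univ.filter (fun e => src e = v), L.count e)
        + (if v = b then 1 else 0) := by
  induction L generalizing a with
  | nil => simp [IsWalk] at h; simp [h]
  | cons x L ih =>
    obtain ⟨hx, hL⟩ := h
    have key : ∀ g : Fin E → Fin M,
        ∑ e ∈ Finset.univ.filter (fun e => g e = v), (x :: L).count e
          = (∑ e ∈ Finset.univ.filter (fun e => g e = v), L.count e)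
            + (if v = g x then 1 else 0) := by
      intro g
      simp only [List.count_cons]
      rw [Finset.sum_add_distrib]
      congr 1
      simp only [beq_iff_eq]
      rcases eq_or_ne v (g x) with hv | hv
      · rw [if_pos hv]
        rw [Finset.sum_eq_single x]
        · simp
        · intro b _ hbx
          simp [Ne.symm hbx]
        · intro hxn
          simp [hv.symm] at hxn
      · rw [if_neg hv]
        apply Finset.sum_eq_zero
        intro b hb
        simp only [Finset.mem_filter] at hb
        have hxb : x ≠ b := fun hc => hv (by rw [← hb.2, hc])
        simp [hxb]
    rw [key tgt, key src]
    have ihh := ih hL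
    rw [hx]
    omega

lemma closed_walk_conserved {a : Fin M} {L : List (Fin E)}
    (h : IsWalk src tgt a a L) : Conserved src tgt (fun e => L.count e) := by
  intro v
  show (∑ e ∈ Finset.univ.filter (fun e => tgt e = v), L.count e)
      = ∑ e ∈ Finset.univ.filter (fun e => src e = v), L.count e
  have := walk_count h v
  omega

/-- A positive flow forces every edge to lie on a directed cycle. -/
lemma flow_cycle {f : Fin E → ℕ} (hpos : ∀ e, 0 < f e) (hc : Conserved src tgt f)
    (e : Fin E) : Relation.ReflTransGen (DStep src tgt) (tgt e) (src e) := by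
  classical
  by_contra hcon
  set S : Finset (Fin M) :=
    Finset.univ.filter (fun x => Relation.ReflTransGen (DStep src tgt) (tgt e) x) with hS
  have hmemS : ∀ x, x ∈ S ↔ Relation.ReflTransGen (DStep src tgt) (tgt e) x := by
    intro x; simp [hS]
  have hsum : ∑ e' ∈ Finset.univ.filter (fun e' => tgt e' ∈ S), f e'
      = ∑ e' ∈ Finset.univ.filter (fun e' => src e' ∈ S), f e' := by
    rw [← Finset.sum_fiberwise_eq_sum_filter Finset.univ S tgt f,
        ← Finset.sum_fiberwise_eq_sum_filter Finset.univ S src f]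
    exact Finset.sum_congr rfl fun v _ => hc v
  have hsub : Finset.univ.filter (fun e' => src e' ∈ S)
      ⊆ Finset.univ.filter (fun e' => tgt e' ∈ S) := by
    intro e' he'
    simp only [Finset.mem_filter, Finset.mem_univ, true_and, hmemS] at he' ⊢
    exact he'.tail ⟨e', rfl, rfl⟩
  have hlt : ∑ e' ∈ Finset.univ.filter (fun e' => src e' ∈ S), f e'
      < ∑ e' ∈ Finset.univ.filter (fun e' => tgt e' ∈ S), f e' := by
    refine Finset.sum_lt_sum_of_subset hsub (i := e) ?_ ?_ (hpos e) ?_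
    · simp only [Finset.mem_filter, Finset.mem_univ, true_and, hmemS]
      exact Relation.ReflTransGen.refl
    · simp only [Finset.mem_filter, Finset.mem_univ, true_and, hmemS]
      exact hcon
    · intro j _ _; exact Nat.zero_le _
  omega

end Aux

/-- a finite multi-digraph with at least one edge admits a flow strictly
positive on every edge iff it is reflexive; moreover such a flow can be chosen with all
values at most `E ^ M`. -/
theorem exists_positive_flow_iff_reflexive (M E : ℕ) (hE : 0 < E)
    (src tgt : Fin E → Fin M) :
    ((∃ f : Fin E → ℕ, (∀ e, 0 < f e) ∧ Conserved src tgt f) ↔ Reflexive' src tgt) ∧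
    (Reflexive' src tgt →
      ∃ f : Fin E → ℕ, (∀ e, 0 < f e ∧ f e ≤ E ^ M) ∧ Conserved src tgt f) := by
  classical
  have hM : 0 < M := (src ⟨0, hE⟩).pos
  have construct : Reflexive' src tgt →
      ∃ f : Fin E → ℕ, (∀ e, 0 < f e ∧ f e ≤ E ^ M) ∧ Conserved src tgt f := by
    intro hrefl
    choose C hnd hmem hwalk using exists_cycle hrefl
    refine ⟨fun e' => ∑ e : Fin E, (C e).count e', fun e' => ⟨?_, ?_⟩, ?_⟩
    · refine lt_of_lt_of_le ?_
        (Finset.single_le_sum (f := fun e => (C e).count e') (fun _ _ => Nat.zero_le _)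
          (Finset.mem_univ e'))
      exact List.count_pos_iff.mpr (hmem e')
    · calc ∑ e : Fin E, (C e).count e' ≤ ∑ _e : Fin E, 1 :=
            Finset.sum_le_sum fun i _ => List.nodup_iff_count_le_one.mp (hnd i) e'
        _ = E := by simp
        _ ≤ E ^ M := Nat.le_self_pow hM.ne' E
    · intro v
      calc ∑ e' ∈ Finset.univ.filter (fun e' => tgt e' = v), ∑ e : Fin E, (C e).count e'
          = ∑ e : Fin E, ∑ e' ∈ Finset.univ.filter (fun e' => tgt e' = v), (C e).count e' :=
            Finset.sum_comm
        _ = ∑ e : Fin E, ∑ e' ∈ Finset.univ.filter (fun e' => src e' = v), (C e).count e' :=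
            Finset.sum_congr rfl fun e _ => closed_walk_conserved (hwalk e) v
        _ = ∑ e' ∈ Finset.univ.filter (fun e' => src e' = v), ∑ e : Fin E, (C e).count e' :=
            Finset.sum_comm
  refine ⟨⟨?_, fun hrefl => ?_⟩, construct⟩
  · rintro ⟨f, hpos, hc⟩ a b hab
    induction hab with
    | refl => exact Relation.ReflTransGen.refl
    | tail _ hstep ih =>
      obtain ⟨e, he⟩ := hstep
      rcases he with ⟨h1, h2⟩ | ⟨h1, h2⟩
      · exact ih.tail ⟨e, h1, h2⟩
      · exact ih.trans (h2 ▸ h1 ▸ flow_cycle hpos hc e)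
  · obtain ⟨f, hf, hc⟩ := construct hrefl
    exact ⟨f, fun e => (hf e).1, hc⟩
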